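/- Let (X,Y) be a random pair such that the conditional distribution of Y given X has a density f(y|x) with respect to Lebesgue measure on ℝⁿ, and let X₁, X₂ be independent random variables each distributed as X. Then for any s ∈ ℝ, V_s(Y|X) = E[ K_s(X, X) ] − E[ K_s(X₁, X₂) ], where K_s(x₁, x₂) = ∫ ‖y‖^s f(y|x₁) f(y|x₂) dy (assuming these expectations are finite). -/

import Mathlib

open MeasureTheory Set
open scoped ENNReal NNReal Real ProbabilityTheory

/-- **Variance decomposition of `V_s` via the expected likelihood kernel.** Let `(X,Y)` be a
random pair where the conditional distribution of `Y` given `X` has density `f(·|x)` on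
`ℝⁿ`, with marginal density `f_Y(y) = E[f(y|X)]` and support `S_Y`, and let `X₁, X₂` be
independent random variables each distributed as `X`. Then for any `s ∈ ℝ`,
`V_s(Y|X) = E[K_s(X,X)] − E[K_s(X₁,X₂)]`, where
`V_s(Y|X) = ∫_{S_Y} ‖y‖^s E[(f(y|X) − f_Y(y))²] dy` and
`K_s(x₁,x₂) = ∫ ‖y‖^s f(y|x₁) f(y|x₂) dy` (assuming these expectations are finite). -/
theorem var_conditional_density_kernel_decomposition {n : ℕ}
    {Ω : Type*} [MeasureSpace Ω] [IsProbabilityMeasure (ℙ : Measure Ω)]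
    {𝒳 : Type*} [MeasurableSpace 𝒳]
    (X : Ω → 𝒳) (hX : Measurable X)
    (Y : Ω → EuclideanSpace ℝ (Fin n)) (hY : Measurable Y)
    (f : 𝒳 → EuclideanSpace ℝ (Fin n) → ℝ)
    (hf : Measurable (Function.uncurry f)) (hf0 : ∀ x y, 0 ≤ f x y)
    (κ : ProbabilityTheory.Kernel 𝒳 (EuclideanSpace ℝ (Fin n))) [ProbabilityTheory.IsMarkovKernel κ]
    (hκ : ∀ x, κ x = volume.withDensity (fun y => ENNReal.ofReal (f x y)))
    (hjoint : Measure.map (fun ω => (X ω, Y ω)) ℙ = (Measure.map X ℙ) ⊗ₘ κ)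
    (X₁ X₂ : Ω → 𝒳) (hX₁ : Measurable X₁) (hX₂ : Measurable X₂)
    (hindep : ProbabilityTheory.IndepFun X₁ X₂ ℙ)
    (hid₁ : Measure.map X₁ ℙ = Measure.map X ℙ) (hid₂ : Measure.map X₂ ℙ = Measure.map X ℙ)
    (s : ℝ)
    (hKdiag : ∫⁻ ω, ∫⁻ y, ENNReal.ofReal (‖y‖ ^ s)
        * ENNReal.ofReal (f (X ω) y) * ENNReal.ofReal (f (X ω) y) ∂(volume) ∂ℙ ≠ ⊤)
    (hKoff : ∫⁻ ω, ∫⁻ y, ENNReal.ofReal (‖y‖ ^ s)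
        * ENNReal.ofReal (f (X₁ ω) y) * ENNReal.ofReal (f (X₂ ω) y) ∂(volume) ∂ℙ ≠ ⊤) :
    ∫ y in {y | 0 < ∫ ω, f (X ω) y ∂ℙ},
        ‖y‖ ^ s * ∫ ω, (f (X ω) y - ∫ ω', f (X ω') y ∂ℙ) ^ 2 ∂ℙ
      = (∫ ω, ∫ y, ‖y‖ ^ s * (f (X ω) y * f (X ω) y) ∂(volume) ∂ℙ)
        - ∫ ω, ∫ y, ‖y‖ ^ s * (f (X₁ ω) y * f (X₂ ω) y) ∂(volume) ∂ℙ := by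
  classical
  have hμP : IsProbabilityMeasure (Measure.map X ℙ) := Measure.isProbabilityMeasure_map hX.aemeasurable
  set μ : Measure 𝒳 := Measure.map X ℙ with hμdef
  -- ENNReal versions
  set F : 𝒳 → EuclideanSpace ℝ (Fin n) → ℝ≥0∞ := fun x y => ENNReal.ofReal (f x y) with hFdef
  set W : EuclideanSpace ℝ (Fin n) → ℝ≥0∞ := fun y => ENNReal.ofReal (‖y‖ ^ s) with hWdef
  have hWnn : ∀ y : EuclideanSpace ℝ (Fin n), 0 ≤ ‖y‖ ^ s :=
    fun y => Real.rpow_nonneg (norm_nonneg y) s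
  have hFmeas : Measurable (fun p : 𝒳 × EuclideanSpace ℝ (Fin n) => F p.1 p.2) :=
    hf.ennreal_ofReal
  have hWmeas : Measurable W := by
    have : Measurable fun y : EuclideanSpace ℝ (Fin n) => ‖y‖ ^ s := by fun_prop
    exact this.ennreal_ofReal
  set M : EuclideanSpace ℝ (Fin n) → ℝ≥0∞ := fun y => ∫⁻ x, F x y ∂μ with hMdef
  set Q : EuclideanSpace ℝ (Fin n) → ℝ≥0∞ := fun y => ∫⁻ x, F x y * F x y ∂μ with hQdef
  have hMmeas : Measurable M := Measurable.lintegral_prod_left hFmeas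
  have hQmeas : Measurable Q := Measurable.lintegral_prod_left (hFmeas.mul hFmeas)
  have hFymeas : ∀ y, Measurable fun x => F x y :=
    fun y => hFmeas.comp (measurable_id.prodMk measurable_const)
  have hφmeas : ∀ y, Measurable fun ω => f (X ω) y :=
    fun y => hf.comp (hX.prodMk measurable_const)
  -- inner kernels, as functions of x (resp. pairs)
  have hJmeas : Measurable fun x => ∫⁻ y, W y * (F x y * F x y) ∂volume := by
    exact Measurable.lintegral_prod_right'
      ((hWmeas.comp measurable_snd).mul (hFmeas.mul hFmeas))
  have hJomeas : Measurable fun p : 𝒳 × 𝒳 => ∫⁻ y, W y * (F p.1 y * F p.2 y) ∂volume := by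
    exact Measurable.lintegral_prod_right'
      ((hWmeas.comp measurable_snd).mul
        ((hFmeas.comp (measurable_fst.fst.prodMk measurable_snd)).mul
          (hFmeas.comp (measurable_fst.snd.prodMk measurable_snd))))
  -- E1 : diagonal lintegral identity
  have E1 : (∫⁻ ω, ∫⁻ y, W y * (F (X ω) y * F (X ω) y) ∂volume ∂ℙ)
      = ∫⁻ y, W y * Q y ∂volume := by
    rw [show (∫⁻ ω, ∫⁻ y, W y * (F (X ω) y * F (X ω) y) ∂volume ∂ℙ)
        = ∫⁻ x, ∫⁻ y, W y * (F x y * F x y) ∂volume ∂μ from (lintegral_map hJmeas hX).symm]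
    rw [lintegral_lintegral_swap]
    · refine lintegral_congr fun y => ?_
      rw [lintegral_const_mul _ (f := fun x => F x y * F x y) ((hFymeas y).mul (hFymeas y))]
    · exact ((hWmeas.comp measurable_snd).mul (hFmeas.mul hFmeas)).aemeasurable
  -- pair map
  have hpair : Measure.map (fun ω => (X₁ ω, X₂ ω)) ℙ = μ.prod μ := by
    rw [(ProbabilityTheory.indepFun_iff_map_prod_eq_prod_map_map hX₁.aemeasurable
      hX₂.aemeasurable).mp hindep, hid₁, hid₂]
  -- E2 : off-diagonal lintegral identity
  have E2 : (∫⁻ ω, ∫⁻ y, W y * (F (X₁ ω) y * F (X₂ ω) y) ∂volume ∂ℙ)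
      = ∫⁻ y, W y * (M y * M y) ∂volume := by
    have h1 : (∫⁻ ω, ∫⁻ y, W y * (F (X₁ ω) y * F (X₂ ω) y) ∂volume ∂ℙ)
        = ∫⁻ p : 𝒳 × 𝒳, ∫⁻ y, W y * (F p.1 y * F p.2 y) ∂volume ∂(μ.prod μ) := by
      rw [← hpair, lintegral_map hJomeas (hX₁.prodMk hX₂)]
    rw [h1, lintegral_lintegral_swap]
    · refine lintegral_congr fun y => ?_
      have hmm : Measurable fun p : 𝒳 × 𝒳 => F p.1 y * F p.2 y :=
        ((hFymeas y).comp measurable_fst).mul ((hFymeas y).comp measurable_snd)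
      rw [lintegral_const_mul _ hmm,
        lintegral_prod_mul (hFymeas y).aemeasurable (hFymeas y).aemeasurable]
    · have : Measurable (Function.uncurry fun (p : 𝒳 × 𝒳) y => W y * (F p.1 y * F p.2 y)) :=
        (hWmeas.comp measurable_snd).mul
          ((hFmeas.comp (measurable_fst.fst.prodMk measurable_snd)).mul
            (hFmeas.comp (measurable_fst.snd.prodMk measurable_snd)))
      exact this.aemeasurable
  -- rewrite hypotheses into associated form
  have hKdiag' : (∫⁻ ω, ∫⁻ y, W y * (F (X ω) y * F (X ω) y) ∂volume ∂ℙ) ≠ ⊤ := by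
    simpa [mul_assoc] using hKdiag
  have hKoff' : (∫⁻ ω, ∫⁻ y, W y * (F (X₁ ω) y * F (X₂ ω) y) ∂volume ∂ℙ) ≠ ⊤ := by
    simpa [mul_assoc] using hKoff
  have hA : (∫⁻ y, W y * Q y ∂volume) ≠ ⊤ := E1 ▸ hKdiag'
  have hB : (∫⁻ y, W y * (M y * M y) ∂volume) ≠ ⊤ := E2 ▸ hKoff'
  -- real marginal representation
  have hMrep : ∀ y, (∫⁻ ω, F (X ω) y ∂ℙ) = M y :=
    fun y => (lintegral_map (hFymeas y) hX).symm
  have hQrep : ∀ y, (∫⁻ ω, F (X ω) y * F (X ω) y ∂ℙ) = Q y :=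
    fun y => (lintegral_map ((hFymeas y).mul (hFymeas y)) hX).symm
  have hgrep : ∀ y, (∫ ω, f (X ω) y ∂ℙ) = (M y).toReal := by
    intro y
    rw [integral_eq_lintegral_of_nonneg_ae (ae_of_all _ fun ω => hf0 _ _)
      (hφmeas y).aestronglyMeasurable, hMrep y]
  have hq2rep : ∀ y, (∫ ω, f (X ω) y * f (X ω) y ∂ℙ) = (Q y).toReal := by
    intro y
    rw [integral_eq_lintegral_of_nonneg_ae
      (ae_of_all _ fun ω => mul_nonneg (hf0 _ _) (hf0 _ _))
      ((hφmeas y).mul (hφmeas y)).aestronglyMeasurable]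
    congr 1
    rw [← hQrep y]
    exact lintegral_congr fun ω => ENNReal.ofReal_mul (hf0 _ _)
  -- a.e. finiteness
  have haeA : ∀ᵐ y : EuclideanSpace ℝ (Fin n), W y * Q y < ⊤ :=
    ae_lt_top (hWmeas.mul hQmeas) hA
  have haeB : ∀ᵐ y : EuclideanSpace ℝ (Fin n), W y * (M y * M y) < ⊤ :=
    ae_lt_top (hWmeas.mul (hMmeas.mul hMmeas)) hB
  -- main pointwise a.e. identity
  have claimMain : ∀ᵐ y : EuclideanSpace ℝ (Fin n),
      ‖y‖ ^ s * (∫ ω, (f (X ω) y - (M y).toReal) ^ 2 ∂ℙ)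
        = (W y * Q y).toReal - (W y * (M y * M y)).toReal := by
    filter_upwards [haeA, haeB] with y h1 h2
    by_cases hW0 : W y = 0
    · have hs0 : ‖y‖ ^ s = 0 :=
        le_antisymm (ENNReal.ofReal_eq_zero.mp hW0) (hWnn y)
      simp [hW0, hs0]
    · have hWt : W y ≠ ⊤ := ENNReal.ofReal_ne_top
      have hQt : Q y ≠ ⊤ := by
        intro h
        rw [h, ENNReal.mul_top hW0] at h1
        exact (lt_irrefl _ h1).elim
      have hMt : M y ≠ ⊤ := by
        intro h
        rw [h, ENNReal.top_mul ENNReal.top_ne_zero, ENNReal.mul_top hW0] at h2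
        exact (lt_irrefl _ h2).elim
      set c : ℝ := (M y).toReal with hcdef
      have hint1 : Integrable (fun ω => f (X ω) y) ℙ := by
        refine ⟨(hφmeas y).aestronglyMeasurable, ?_⟩
        rw [hasFiniteIntegral_iff_ofReal (ae_of_all _ fun ω => hf0 _ _)]
        rw [hMrep y]; exact lt_top_iff_ne_top.mpr hMt
      have hint2 : Integrable (fun ω => f (X ω) y * f (X ω) y) ℙ := by
        refine ⟨((hφmeas y).mul (hφmeas y)).aestronglyMeasurable, ?_⟩
        rw [hasFiniteIntegral_iff_ofReal
          (ae_of_all _ fun ω => mul_nonneg (hf0 _ _) (hf0 _ _))]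
        have : (∫⁻ ω, ENNReal.ofReal (f (X ω) y * f (X ω) y) ∂ℙ) = Q y := by
          rw [← hQrep y]
          exact lintegral_congr fun ω => ENNReal.ofReal_mul (hf0 _ _)
        rw [this]; exact lt_top_iff_ne_top.mpr hQt
      have hc : (∫ ω, f (X ω) y ∂ℙ) = c := hgrep y
      have hvar : (∫ ω, (f (X ω) y - c) ^ 2 ∂ℙ) = (Q y).toReal - c * c := by
        calc (∫ ω, (f (X ω) y - c) ^ 2 ∂ℙ)
            = ∫ ω, ((f (X ω) y * f (X ω) y - 2 * c * f (X ω) y) + c ^ 2) ∂ℙ := by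
              refine integral_congr_ae (ae_of_all _ fun ω => ?_); ring
          _ = (∫ ω, (f (X ω) y * f (X ω) y - 2 * c * f (X ω) y) ∂ℙ) + ∫ _ω, (c:ℝ) ^ 2 ∂ℙ :=
              integral_add (hint2.sub (hint1.const_mul (2 * c))) (integrable_const _)
          _ = ((∫ ω, f (X ω) y * f (X ω) y ∂ℙ) - ∫ ω, 2 * c * f (X ω) y ∂ℙ) + c ^ 2 := by
              rw [integral_sub hint2 (hint1.const_mul (2 * c)), integral_const, probReal_univ]
              simp
          _ = (Q y).toReal - c * c := by
              rw [hq2rep y, MeasureTheory.integral_const_mul, hc]; ring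
      rw [hvar, ENNReal.toReal_mul, ENNReal.toReal_mul, ENNReal.toReal_mul,
        ENNReal.toReal_ofReal (hWnn y)]
      ring
  -- off-support vanishing
  have claimOff : ∀ᵐ y : EuclideanSpace ℝ (Fin n),
      ¬ (0 < (M y).toReal) → (W y * Q y).toReal - (W y * (M y * M y)).toReal = 0 := by
    filter_upwards [haeA, haeB] with y h1 h2 hyS
    by_cases hW0 : W y = 0
    · simp [hW0]
    · have hMt : M y ≠ ⊤ := by
        intro h
        rw [h] at h2
        have : W y * (⊤ * ⊤ : ℝ≥0∞) = ⊤ := by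
          rw [ENNReal.top_mul ENNReal.top_ne_zero, ENNReal.mul_top hW0]
        rw [this] at h2
        exact (lt_irrefl _ h2).elim
      have hM0 : M y = 0 := by
        have h3 : (M y).toReal = 0 := le_antisymm (not_lt.mp hyS) ENNReal.toReal_nonneg
        exact ((ENNReal.toReal_eq_zero_iff _).mp h3).resolve_right hMt
      have hF0 : (fun x => F x y) =ᶠ[ae μ] 0 := (lintegral_eq_zero_iff (hFymeas y)).mp hM0
      have hQ0 : Q y = 0 := by
        rw [hQdef]
        rw [lintegral_eq_zero_iff (f := fun x => F x y * F x y) ((hFymeas y).mul (hFymeas y))]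
        filter_upwards [hF0] with x hx
        simp [hx]
      simp [hM0, hQ0]
  -- integrability of the two real pieces
  have hintp : Integrable (fun y => (W y * Q y).toReal) volume :=
    integrable_toReal_of_lintegral_ne_top (hWmeas.mul hQmeas).aemeasurable hA
  have hintb : Integrable (fun y => (W y * (M y * M y)).toReal) volume :=
    integrable_toReal_of_lintegral_ne_top (hWmeas.mul (hMmeas.mul hMmeas)).aemeasurable hB
  -- rewrite the goal's marginal densities
  simp only [hgrep]
  -- the support set
  set S : Set (EuclideanSpace ℝ (Fin n)) := {y | 0 < (M y).toReal} with hSdef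
  have hSmeas : MeasurableSet S := measurableSet_lt measurable_const hMmeas.ennreal_toReal
  -- LHS computation
  have hLHS : (∫ y in S, ‖y‖ ^ s * ∫ ω, (f (X ω) y - (M y).toReal) ^ 2 ∂ℙ)
      = (∫⁻ y, W y * Q y ∂volume).toReal - (∫⁻ y, W y * (M y * M y) ∂volume).toReal := by
    rw [setIntegral_congr_ae hSmeas (claimMain.mono fun y hy _ => hy)]
    rw [setIntegral_eq_integral_of_ae_compl_eq_zero (s := S) (μ := volume)
      (claimOff.mono fun y hy hyS => hy hyS)]
    rw [integral_sub hintp hintb,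
      integral_toReal (f := fun y => W y * Q y) (hWmeas.mul hQmeas).aemeasurable haeA,
      integral_toReal (f := fun y => W y * (M y * M y)) (hWmeas.mul (hMmeas.mul hMmeas)).aemeasurable haeB]
  -- RHS first term
  have hRHS1 : (∫ ω, ∫ y, ‖y‖ ^ s * (f (X ω) y * f (X ω) y) ∂volume ∂ℙ)
      = (∫⁻ y, W y * Q y ∂volume).toReal := by
    have hinner : ∀ ω, (∫ y, ‖y‖ ^ s * (f (X ω) y * f (X ω) y) ∂volume)
        = (∫⁻ y, W y * (F (X ω) y * F (X ω) y) ∂volume).toReal := by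
      intro ω
      rw [integral_eq_lintegral_of_nonneg_ae
        (ae_of_all _ fun y => mul_nonneg (hWnn y) (mul_nonneg (hf0 _ _) (hf0 _ _)))
        (by fun_prop : Measurable fun y => ‖y‖ ^ s * (f (X ω) y * f (X ω) y)).aestronglyMeasurable]
      congr 1
      refine lintegral_congr fun y => ?_
      rw [ENNReal.ofReal_mul (hWnn y), ENNReal.ofReal_mul (hf0 _ _)]
    simp only [hinner]
    have hJX : Measurable fun ω => ∫⁻ y, W y * (F (X ω) y * F (X ω) y) ∂volume :=
      hJmeas.comp hX
    rw [integral_toReal hJX.aemeasurable (ae_lt_top hJX hKdiag'), E1]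
  -- RHS second term
  have hRHS2 : (∫ ω, ∫ y, ‖y‖ ^ s * (f (X₁ ω) y * f (X₂ ω) y) ∂volume ∂ℙ)
      = (∫⁻ y, W y * (M y * M y) ∂volume).toReal := by
    have hinner : ∀ ω, (∫ y, ‖y‖ ^ s * (f (X₁ ω) y * f (X₂ ω) y) ∂volume)
        = (∫⁻ y, W y * (F (X₁ ω) y * F (X₂ ω) y) ∂volume).toReal := by
      intro ω
      rw [integral_eq_lintegral_of_nonneg_ae
        (ae_of_all _ fun y => mul_nonneg (hWnn y) (mul_nonneg (hf0 _ _) (hf0 _ _)))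
        (by fun_prop :
          Measurable fun y => ‖y‖ ^ s * (f (X₁ ω) y * f (X₂ ω) y)).aestronglyMeasurable]
      congr 1
      refine lintegral_congr fun y => ?_
      rw [ENNReal.ofReal_mul (hWnn y), ENNReal.ofReal_mul (hf0 _ _)]
    simp only [hinner]
    have hJX : Measurable fun ω => ∫⁻ y, W y * (F (X₁ ω) y * F (X₂ ω) y) ∂volume :=
      hJomeas.comp (hX₁.prodMk hX₂)
    rw [integral_toReal hJX.aemeasurable (ae_lt_top hJX hKoff'), E2]
  rw [hRHS1, hRHS2]
  exact hLHS
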